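/- Let T be a rooted binary tree where each leaf has a positive integer weight and each internal node's weight is the sum of its two children's weights; define rank(v) = ⌊log₂(weight(v))⌋. Call a node 'charged' if its weight does not exceed its sibling's weight. Then for each k, the number of charged nodes of rank k is at most W / 2^k, where W is the weight of the root. -/

import Mathlib

/-- Rooted binary trees with positive integer weights at the leaves. -/
inductive WTree : Type
  | leaf : ℕ → WTree
  | node : WTree → WTree → WTree

namespace WTree

/-- The weight of a node: leaf weights are given, internal weights are sums of children. -/
def weight : WTree → ℕ
  | leaf w => w
  | node l r => weight l + weight r

/-- All leaf weights are positive. -/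
def posWeights : WTree → Prop
  | leaf w => 1 ≤ w
  | node l r => posWeights l ∧ posWeights r

/-- The rank of a node: `⌊log₂ weight⌋`. -/
def rank (t : WTree) : ℕ := Nat.log 2 t.weight

/-- The number of charged nodes of rank `k` in the tree: a node is charged when its
weight does not exceed its sibling's weight. -/
def chargedCount (k : ℕ) : WTree → ℕ
  | leaf _ => 0
  | node l r =>
      (if weight l ≤ weight r ∧ rank l = k then 1 else 0) +
      (if weight r ≤ weight l ∧ rank r = k then 1 else 0) +
      chargedCount k l + chargedCount k r

end WTree

namespace WTree

lemma weight_pos : ∀ t : WTree, t.posWeights → 1 ≤ t.weight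
  | leaf w, h => h
  | node l r, h => le_trans (weight_pos l h.1) (Nat.le_add_right _ _)

lemma pow_le_of_rank {t : WTree} {k : ℕ} (hpos : t.posWeights) (h : t.rank = k) :
    2 ^ k ≤ t.weight := by
  subst h
  exact Nat.pow_log_le_self 2 (Nat.one_le_iff_ne_zero.mp (weight_pos t hpos))

lemma chargedCount_eq_zero : ∀ t : WTree, t.posWeights → ∀ k : ℕ, t.rank ≤ k →
    t.chargedCount k = 0
  | leaf _, _, _, _ => rfl
  | node l r, hpos, k, hrk => by
    have hl1 := Nat.one_le_iff_ne_zero.mp (weight_pos l hpos.1)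
    have hr1 := Nat.one_le_iff_ne_zero.mp (weight_pos r hpos.2)
    have hlw : weight l ≤ weight (node l r) := Nat.le_add_right _ _
    have hrw : weight r ≤ weight (node l r) := Nat.le_add_left _ _
    have hranl : rank l ≤ k := le_trans (Nat.log_mono_right hlw) hrk
    have hranr : rank r ≤ k := le_trans (Nat.log_mono_right hrw) hrk
    have hcl := chargedCount_eq_zero l hpos.1 k hranl
    have hcr := chargedCount_eq_zero r hpos.2 k hranr
    have hnl : ¬ (weight l ≤ weight r ∧ rank l = k) := by
      rintro ⟨hle, hrank⟩
      have h2 : 2 ^ (k + 1) ≤ weight (node l r) := by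
        have := pow_le_of_rank hpos.1 hrank
        show 2 ^ (k+1) ≤ weight l + weight r
        calc 2 ^ (k+1) = 2 ^ k + 2 ^ k := by ring
          _ ≤ weight l + weight r := Nat.add_le_add this (le_trans this hle)
      have : k + 1 ≤ rank (node l r) :=
        (Nat.le_log_iff_pow_le one_lt_two
          (Nat.one_le_iff_ne_zero.mp (weight_pos _ hpos))).mpr h2
      omega
    have hnr : ¬ (weight r ≤ weight l ∧ rank r = k) := by
      rintro ⟨hle, hrank⟩
      have h2 : 2 ^ (k + 1) ≤ weight (node l r) := by
        have := pow_le_of_rank hpos.2 hrank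
        show 2 ^ (k+1) ≤ weight l + weight r
        calc 2 ^ (k+1) = 2 ^ k + 2 ^ k := by ring
          _ ≤ weight l + weight r := Nat.add_le_add (le_trans this hle) this
      have : k + 1 ≤ rank (node l r) :=
        (Nat.le_log_iff_pow_le one_lt_two
          (Nat.one_le_iff_ne_zero.mp (weight_pos _ hpos))).mpr h2
      omega
    simp [chargedCount, hnl, hnr, hcl, hcr]

lemma mul_chargedCount_le : ∀ t : WTree, t.posWeights → ∀ k : ℕ,
    2 ^ k * t.chargedCount k ≤ t.weight
  | leaf w, hpos, k => by simp [chargedCount, weight]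
  | node l r, hpos, k => by
    have ihl := mul_chargedCount_le l hpos.1 k
    have ihr := mul_chargedCount_le r hpos.2 k
    have hleft : 2 ^ k * ((if weight l ≤ weight r ∧ rank l = k then 1 else 0)
        + chargedCount k l) ≤ weight l := by
      by_cases h : weight l ≤ weight r ∧ rank l = k
      · have h0 : chargedCount k l = 0 := chargedCount_eq_zero l hpos.1 k (le_of_eq h.2)
        simpa [h, h0] using pow_le_of_rank hpos.1 h.2
      · simpa [h] using ihl
    have hright : 2 ^ k * ((if weight r ≤ weight l ∧ rank r = k then 1 else 0)
        + chargedCount k r) ≤ weight r := by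
      by_cases h : weight r ≤ weight l ∧ rank r = k
      · have h0 : chargedCount k r = 0 := chargedCount_eq_zero r hpos.2 k (le_of_eq h.2)
        simpa [h, h0] using pow_le_of_rank hpos.2 h.2
      · simpa [h] using ihr
    show 2 ^ k * ((if weight l ≤ weight r ∧ rank l = k then 1 else 0) +
      (if weight r ≤ weight l ∧ rank r = k then 1 else 0) +
      chargedCount k l + chargedCount k r) ≤ weight l + weight r
    calc 2 ^ k * ((if weight l ≤ weight r ∧ rank l = k then 1 else 0) +
        (if weight r ≤ weight l ∧ rank r = k then 1 else 0) +
        chargedCount k l + chargedCount k r)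
        = 2 ^ k * ((if weight l ≤ weight r ∧ rank l = k then 1 else 0) + chargedCount k l)
          + 2 ^ k * ((if weight r ≤ weight l ∧ rank r = k then 1 else 0) + chargedCount k r) := by
          ring
      _ ≤ weight l + weight r := Nat.add_le_add hleft hright

end WTree

/-- The number of charged nodes of rank `k` is at most `W / 2^k`,
where `W` is the weight of the root. -/
theorem chargedCount_le (t : WTree) (hpos : t.posWeights) (k : ℕ) :
    t.chargedCount k ≤ t.weight / 2 ^ k := by
  rw [Nat.le_div_iff_mul_le (Nat.pow_pos (n := k) (by norm_num))]
  rw [Nat.mul_comm]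
  exact WTree.mul_chargedCount_le t hpos k
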